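/- arXiv:2309.15639 — 2 statements merged into one kernel-verified Lean document; each statement's English description precedes it below -/
import Mathlib

section
/- Deterministic one-step SAM descent inequality: let f have L-Lipschitz gradient, let x ∈ ℝⁿ, let ε be any vector with ‖ε‖ = ρ, and set x⁺ = x − η∇f(x + ε). Then f(x⁺) − f(x) ≤ −(η − (3/2)Lη²)‖∇f(x)‖² + Lρ²/2 + L³η²ρ². -/
set_option maxHeartbeats 1000000

open scoped RealInnerProductSpace

lemma descent_lemma {n : ℕ} (f : EuclideanSpace ℝ (Fin n) → ℝ) (L : ℝ) (hL : 0 ≤ L)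
    (hdiff : Differentiable ℝ f)
    (hlip : ∀ x y, ‖gradient f x - gradient f y‖ ≤ L * ‖x - y‖)
    (x v : EuclideanSpace ℝ (Fin n)) :
    f (x + v) ≤ f x + ⟪gradient f x, v⟫ + L / 2 * ‖v‖ ^ 2 := by
  have hgc : Continuous (gradient f) := by
    refine (LipschitzWith.of_dist_le_mul (K := L.toNNReal) fun a b => ?_).continuous
    rw [dist_eq_norm, dist_eq_norm, Real.coe_toNNReal L hL]
    exact hlip a b
  have hd : ∀ t : ℝ, HasDerivAt (fun t : ℝ => f (x + t • v))
      (⟪gradient f (x + t • v), v⟫) t := by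
    intro t
    have h1 : HasDerivAt (fun t : ℝ => x + t • v) v t := by
      simpa using ((hasDerivAt_id t).smul_const v).const_add x
    have h2 := (hdiff (x + t • v)).hasGradientAt.hasFDerivAt
    have h3 := h2.comp_hasDerivAt t h1
    have h4 : HasDerivAt (fun t : ℝ => f (x + t • v)) ((InnerProductSpace.toDual ℝ (EuclideanSpace ℝ (Fin n))) (gradient f (x + t • v)) v) t := h3
    simpa [InnerProductSpace.toDual_apply_apply] using h4
  have hcont : Continuous fun t : ℝ => ⟪gradient f (x + t • v), v⟫ := by
    apply Continuous.inner
    · exact hgc.comp (continuous_const.add (continuous_id.smul continuous_const))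
    · exact continuous_const
  have key : f (x + v) - f x = ∫ t in (0:ℝ)..1, ⟪gradient f (x + t • v), v⟫ := by
    have := intervalIntegral.integral_eq_sub_of_hasDerivAt (f := fun t : ℝ => f (x + t • v))
      (fun t _ => hd t) (hcont.intervalIntegrable 0 1)
    simpa using this.symm
  have hb : ∀ t ∈ Set.Icc (0:ℝ) 1,
      ⟪gradient f (x + t • v), v⟫ ≤ ⟪gradient f x, v⟫ + L * t * ‖v‖ ^ 2 := by
    intro t ht
    have h1 : ⟪gradient f (x + t • v), v⟫ =
        ⟪gradient f x, v⟫ + ⟪gradient f (x + t • v) - gradient f x, v⟫ := by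
      rw [inner_sub_left]; ring
    have h2 : ⟪gradient f (x + t • v) - gradient f x, v⟫ ≤
        ‖gradient f (x + t • v) - gradient f x‖ * ‖v‖ := real_inner_le_norm _ _
    have h3 : ‖gradient f (x + t • v) - gradient f x‖ ≤ L * (t * ‖v‖) := by
      have := hlip (x + t • v) x
      simpa [norm_smul, abs_of_nonneg ht.1] using this
    have hv : (0:ℝ) ≤ ‖v‖ := norm_nonneg _
    nlinarith [mul_le_mul_of_nonneg_right h3 hv]
  have hint : (∫ t in (0:ℝ)..1, ⟪gradient f (x + t • v), v⟫) ≤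
      ∫ t in (0:ℝ)..1, (⟪gradient f x, v⟫ + L * t * ‖v‖ ^ 2) := by
    apply intervalIntegral.integral_mono_on (by norm_num)
      (hcont.intervalIntegrable 0 1) ((continuous_const.add ((continuous_const.mul continuous_id').mul continuous_const)).intervalIntegrable 0 1)
    exact hb
  have hval : (∫ t in (0:ℝ)..1, (⟪gradient f x, v⟫ + L * t * ‖v‖ ^ 2)) =
      ⟪gradient f x, v⟫ + L / 2 * ‖v‖ ^ 2 := by
    have h1 : IntervalIntegrable (fun _ : ℝ => ⟪gradient f x, v⟫)
        MeasureTheory.volume 0 1 := intervalIntegrable_const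
    have h2 : IntervalIntegrable (fun t : ℝ => L * t * ‖v‖ ^ 2)
        MeasureTheory.volume 0 1 :=
      ((continuous_const.mul continuous_id').mul continuous_const).intervalIntegrable 0 1
    rw [intervalIntegral.integral_add h1 h2]
    have h5 : (∫ t in (0:ℝ)..1, L * t * ‖v‖ ^ 2) = L * (1/2) * ‖v‖ ^ 2 := by
      have h4 : (fun t : ℝ => L * t * ‖v‖ ^ 2) = fun t : ℝ => (L * ‖v‖ ^ 2) * t := by
        funext t; ring
      rw [h4, intervalIntegral.integral_const_mul, integral_id]
      ring
    rw [h5, intervalIntegral.integral_const, sub_zero, one_smul]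
    ring
  linarith [key, hint, hval.le, hval.ge]

theorem stmt11 {n : ℕ} (f : EuclideanSpace ℝ (Fin n) → ℝ) (L η ρ : ℝ)
    (hL : 0 < L) (hη : 0 < η) (hρ : 0 < ρ)
    (hdiff : Differentiable ℝ f)
    (hlip : ∀ x y, ‖gradient f x - gradient f y‖ ≤ L * ‖x - y‖)
    (x ε : EuclideanSpace ℝ (Fin n)) (hε : ‖ε‖ = ρ) :
    f (x - η • gradient f (x + ε)) - f x ≤
      -(η - 3 / 2 * L * η ^ 2) * ‖gradient f x‖ ^ 2 + L * ρ ^ 2 / 2 + L ^ 3 * η ^ 2 * ρ ^ 2 := by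
  set g := gradient f x with hg
  set g' := gradient f (x + ε) with hg'
  have hdesc := descent_lemma f L hL.le hdiff hlip x (-(η • g'))
  have hxv : x + -(η • g') = x - η • g' := by abel
  rw [hxv] at hdesc
  have hinner : ⟪g, -(η • g')⟫ = -η * ⟪g, g'⟫ := by
    rw [inner_neg_right, real_inner_smul_right]; ring
  have hnv : ‖-(η • g')‖ ^ 2 = η ^ 2 * ‖g'‖ ^ 2 := by
    rw [norm_neg, norm_smul]
    simp [abs_of_pos hη]; ring
  rw [hinner, hnv] at hdesc
  -- key bounds
  have hdiffn : ‖g' - g‖ ≤ L * ρ := by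
    have := hlip (x + ε) x
    simpa [hε] using this
  have hd : ⟪g, g' - g⟫ ≥ -(‖g‖ * (L * ρ)) := by
    have h1 : |⟪g, g' - g⟫| ≤ ‖g‖ * ‖g' - g‖ := abs_real_inner_le_norm _ _
    have h2 : ‖g‖ * ‖g' - g‖ ≤ ‖g‖ * (L * ρ) :=
      mul_le_mul_of_nonneg_left hdiffn (norm_nonneg _)
    have := neg_abs_le ⟪g, g' - g⟫
    linarith
  have hgg' : ⟪g, g'⟫ = ‖g‖ ^ 2 + ⟪g, g' - g⟫ := by
    rw [inner_sub_right, real_inner_self_eq_norm_sq]; ring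
  have hb : ‖g'‖ ≤ ‖g‖ + L * ρ := by
    calc ‖g'‖ = ‖g + (g' - g)‖ := by rw [add_sub_cancel]
    _ ≤ ‖g‖ + ‖g' - g‖ := norm_add_le _ _
    _ ≤ ‖g‖ + L * ρ := by linarith
  have hb2 : ‖g'‖ ^ 2 ≤ (‖g‖ + L * ρ) ^ 2 := by
    have := norm_nonneg g'
    nlinarith
  have ha : (0:ℝ) ≤ ‖g‖ := norm_nonneg _
  rw [hgg'] at hdesc
  have hC : η * (-(‖g‖ * (L * ρ))) ≤ η * ⟪g, g' - g⟫ :=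
    mul_le_mul_of_nonneg_left hd hη.le
  have hA : η * (‖g‖ * (L * ρ)) ≤ L * η ^ 2 * ‖g‖ ^ 2 / 2 + L * ρ ^ 2 / 2 := by
    nlinarith [mul_nonneg hL.le (sq_nonneg (η * ‖g‖ - ρ))]
  have hB : L / 2 * (η ^ 2 * ‖g'‖ ^ 2) ≤ L * η ^ 2 * ‖g‖ ^ 2 + L ^ 3 * η ^ 2 * ρ ^ 2 := by
    nlinarith [mul_nonneg (mul_nonneg hL.le (sq_nonneg η)) (sq_nonneg (‖g‖ - L * ρ)),
      mul_le_mul_of_nonneg_left hb2 (mul_nonneg (mul_nonneg hL.le (by norm_num : (0:ℝ) ≤ 1/2)) (sq_nonneg η))]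
  nlinarith [hdesc, hC, hA, hB]
end

section
/- Let f : ℝⁿ → ℝ have L-Lipschitz gradient and be bounded below by f*. Consider the deterministic SAM iteration x_{t+1} = x_t − η∇f(x_t + ε_t) with arbitrary ε_t satisfying ‖ε_t‖ = ρ for all t, where η ≤ 2/(3L). Then (1 − 3Lη/2)·(1/T)∑_{t=0}^{T−1}‖∇f(x_t)‖² ≤ (f(x_0) − f*)/(ηT) + Lρ²/(2η) + L³ηρ². -/
open InnerProductSpace

lemma line_hasDerivAt {n : ℕ} (f : EuclideanSpace ℝ (Fin n) → ℝ)
    (hdiff : Differentiable ℝ f) (x v : EuclideanSpace ℝ (Fin n)) (t : ℝ) :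
    HasDerivAt (fun s : ℝ => f (x + s • v)) (⟪gradient f (x + t • v), v⟫_ℝ) t := by
  have hline : HasDerivAt (fun s : ℝ => x + s • v) v t := by
    simpa using ((hasDerivAt_id t).smul_const v).const_add x
  have hf := (hdiff (x + t • v)).hasGradientAt.hasFDerivAt
  have := hf.comp_hasDerivAt t hline
  simpa [InnerProductSpace.toDual_apply_apply, Function.comp_def] using this

lemma descent {n : ℕ} (f : EuclideanSpace ℝ (Fin n) → ℝ) (L : ℝ) (hL : 0 < L)
    (hdiff : Differentiable ℝ f)
    (hlip : ∀ a b, ‖gradient f a - gradient f b‖ ≤ L * ‖a - b‖)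
    (x v : EuclideanSpace ℝ (Fin n)) :
    f (x + v) ≤ f x + ⟪gradient f x, v⟫_ℝ + L / 2 * ‖v‖ ^ 2 := by
  set c : ℝ := ⟪gradient f x, v⟫_ℝ with hc
  set φ : ℝ → ℝ := fun t => f (x + t • v) - t * c - t ^ 2 * (L * ‖v‖ ^ 2 / 2) with hφ
  have hd : ∀ t : ℝ, HasDerivAt φ
      (⟪gradient f (x + t • v), v⟫_ℝ - c - 2 * t * (L * ‖v‖ ^ 2 / 2)) t := by
    intro t
    have h1 := line_hasDerivAt f hdiff x v t
    have h2 : HasDerivAt (fun s : ℝ => s * c) c t := by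
      simpa using (hasDerivAt_id t).mul_const c
    have h3 : HasDerivAt (fun s : ℝ => s ^ 2 * (L * ‖v‖ ^ 2 / 2))
        (2 * t * (L * ‖v‖ ^ 2 / 2)) t := by
      simpa using ((hasDerivAt_pow 2 t).mul_const (L * ‖v‖ ^ 2 / 2))
    exact (h1.sub h2).sub h3
  have hmono : AntitoneOn φ (Set.Icc 0 1) := by
    apply antitoneOn_of_deriv_nonpos (convex_Icc 0 1)
    · exact Continuous.continuousOn (by
        exact continuous_iff_continuousAt.2 fun t => (hd t).continuousAt)
    · intro t ht
      exact ((hd t).differentiableAt).differentiableWithinAt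
    · intro t ht
      rw [interior_Icc] at ht
      rw [(hd t).deriv]
      have hip : ⟪gradient f (x + t • v), v⟫_ℝ - c =
          ⟪gradient f (x + t • v) - gradient f x, v⟫_ℝ := by
        rw [inner_sub_left]
      have hb : ⟪gradient f (x + t • v) - gradient f x, v⟫_ℝ ≤ L * t * ‖v‖ ^ 2 := by
        calc ⟪gradient f (x + t • v) - gradient f x, v⟫_ℝ
            ≤ ‖gradient f (x + t • v) - gradient f x‖ * ‖v‖ := real_inner_le_norm _ _
          _ ≤ (L * ‖x + t • v - x‖) * ‖v‖ := by
              have := hlip (x + t • v) x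
              nlinarith [norm_nonneg v]
          _ = L * t * ‖v‖ ^ 2 := by
              have : ‖x + t • v - x‖ = t * ‖v‖ := by
                rw [add_sub_cancel_left, norm_smul, Real.norm_eq_abs,
                  abs_of_pos ht.1]
              rw [this]; ring
      have ht0 : 0 < t := ht.1
      nlinarith [norm_nonneg v]
  have := hmono (Set.left_mem_Icc.2 zero_le_one) (Set.right_mem_Icc.2 zero_le_one) zero_le_one
  simp only [hφ, one_smul, zero_smul, add_zero, one_pow, one_mul, zero_mul,
    sub_zero, zero_pow, mul_zero] at this
  linarith

set_option maxHeartbeats 1000000 in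
theorem stmt12 {n : ℕ} (f : EuclideanSpace ℝ (Fin n) → ℝ) (L η ρ fstar : ℝ)
    (hL : 0 < L) (hη : 0 < η) (hηle : η ≤ 2 / (3 * L)) (hρ : 0 < ρ)
    (hdiff : Differentiable ℝ f)
    (hlip : ∀ x y, ‖gradient f x - gradient f y‖ ≤ L * ‖x - y‖)
    (hlb : ∀ x, fstar ≤ f x)
    (x ε : ℕ → EuclideanSpace ℝ (Fin n))
    (hεnorm : ∀ t, ‖ε t‖ = ρ)
    (hiter : ∀ t, x (t + 1) = x t - η • gradient f (x t + ε t))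
    (T : ℕ) (hT : 1 ≤ T) :
    (1 - 3 * L * η / 2) * ((1 / (T : ℝ)) * ∑ t ∈ Finset.range T, ‖gradient f (x t)‖ ^ 2) ≤
      (f (x 0) - fstar) / (η * T) + L * ρ ^ 2 / (2 * η) + L ^ 3 * η * ρ ^ 2 := by
  have key : ∀ t, η * (1 - 3 * L * η / 2) * ‖gradient f (x t)‖ ^ 2 ≤
      f (x t) - f (x (t + 1)) + L * ρ ^ 2 / 2 + L ^ 3 * η ^ 2 * ρ ^ 2 := by
    intro t
    set a := gradient f (x t) with ha
    set b := gradient f (x t + ε t) with hb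
    have hx1 : x (t + 1) = x t + (-η) • b := by
      rw [hiter t, sub_eq_add_neg, ← neg_smul]
    have hdesc : f (x (t+1)) ≤ f (x t) + ⟪a, (-η) • b⟫_ℝ + L / 2 * ‖(-η) • b‖ ^ 2 := by
      rw [hx1]; exact descent f L hL hdiff hlip (x t) ((-η) • b)
    have hnsm : ‖(-η) • b‖ = η * ‖b‖ := by
      rw [norm_smul, Real.norm_eq_abs, abs_neg, abs_of_pos hη]
    have hipsm : ⟪a, (-η) • b⟫_ℝ = -η * ⟪a, b⟫_ℝ := real_inner_smul_right a b (-η)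
    have hba : ‖b - a‖ ≤ L * ρ := by
      have := hlip (x t + ε t) (x t)
      simpa [add_sub_cancel_left, hεnorm t] using this
    have hinner : ‖a‖ ^ 2 - ‖a‖ * (L * ρ) ≤ ⟪a, b⟫_ℝ := by
      have h1 : ⟪a, b⟫_ℝ = ‖a‖ ^ 2 + ⟪a, b - a⟫_ℝ := by
        rw [inner_sub_right, real_inner_self_eq_norm_sq]; ring
      have h2 : ⟪a, b - a⟫_ℝ ≥ -(‖a‖ * (L * ρ)) := by
        have := abs_real_inner_le_norm a (b - a)
        have hn := norm_nonneg a
        nlinarith [neg_abs_le ⟪a, b - a⟫_ℝ]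
      linarith
    have hnb : ‖b‖ ≤ ‖a‖ + L * ρ := by
      have : ‖b‖ - ‖a‖ ≤ ‖b - a‖ := norm_sub_norm_le b a
      linarith
    have hna := norm_nonneg a
    have hnb0 := norm_nonneg b
    rw [hipsm, hnsm] at hdesc
    have hbsq : ‖b‖ ^ 2 ≤ (‖a‖ + L * ρ) ^ 2 := by nlinarith
    have h1 : η * (‖a‖ ^ 2 - ‖a‖ * (L * ρ)) ≤ η * ⟪a, b⟫_ℝ :=
      mul_le_mul_of_nonneg_left hinner hη.le
    have h2 : L / 2 * η ^ 2 * ‖b‖ ^ 2 ≤ L / 2 * η ^ 2 * (‖a‖ + L * ρ) ^ 2 :=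
      mul_le_mul_of_nonneg_left hbsq (by positivity)
    have h3 : 0 ≤ L / 2 * (η * ‖a‖ - ρ) ^ 2 := by positivity
    have h4 : 0 ≤ L * η ^ 2 / 2 * (‖a‖ - L * ρ) ^ 2 := by positivity
    nlinarith [h1, h2, h3, h4]
  have hsum : η * (1 - 3 * L * η / 2) * ∑ t ∈ Finset.range T, ‖gradient f (x t)‖ ^ 2 ≤
      f (x 0) - fstar + T * (L * ρ ^ 2 / 2 + L ^ 3 * η ^ 2 * ρ ^ 2) := by
    have htel : ∑ t ∈ Finset.range T, (f (x t) - f (x (t + 1))) = f (x 0) - f (x T) := by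
      rw [← Finset.sum_range_sub' (fun t => f (x t))]
    calc η * (1 - 3 * L * η / 2) * ∑ t ∈ Finset.range T, ‖gradient f (x t)‖ ^ 2
        = ∑ t ∈ Finset.range T, η * (1 - 3 * L * η / 2) * ‖gradient f (x t)‖ ^ 2 := by
          rw [Finset.mul_sum]
      _ ≤ ∑ t ∈ Finset.range T, (f (x t) - f (x (t + 1)) + L * ρ ^ 2 / 2 +
            L ^ 3 * η ^ 2 * ρ ^ 2) := Finset.sum_le_sum (fun t _ => key t)
      _ = f (x 0) - f (x T) + T * (L * ρ ^ 2 / 2 + L ^ 3 * η ^ 2 * ρ ^ 2) := by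
          rw [Finset.sum_add_distrib, Finset.sum_add_distrib, htel]
          simp [Finset.sum_const]; ring
      _ ≤ f (x 0) - fstar + T * (L * ρ ^ 2 / 2 + L ^ 3 * η ^ 2 * ρ ^ 2) := by
          have := hlb (x T); linarith
  have hT0 : (0:ℝ) < T := by exact_mod_cast hT
  rw [div_add_div _ _ (by positivity) (by positivity : (2:ℝ) * η ≠ 0)]
  have hgoal : (1 - 3 * L * η / 2) * ((1 / (T : ℝ)) *
      ∑ t ∈ Finset.range T, ‖gradient f (x t)‖ ^ 2) =
      (η * (1 - 3 * L * η / 2) * ∑ t ∈ Finset.range T, ‖gradient f (x t)‖ ^ 2) / (η * T) := by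
    field_simp
  rw [hgoal]
  have hrhs : ((f (x 0) - fstar) * (2 * η) + η * T * (L * ρ ^ 2)) / (η * T * (2 * η)) +
      L ^ 3 * η * ρ ^ 2 =
      (f (x 0) - fstar + T * (L * ρ ^ 2 / 2 + L ^ 3 * η ^ 2 * ρ ^ 2)) / (η * T) := by
    field_simp; ring
  rw [hrhs]
  gcongr
end
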